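/- Let (𝒳,d) be a compact metric space, F a finite set, ε > 0 and L ≥ 1. Let M = #(𝒳,d,ε) and N = #(𝒳, d̄_F, ε), where d̄_F is the averaged metric on 𝒳 induced by a family of isometries indexed by F (d̄_F(x,y) = (1/|F|)Σ_{g∈F} d(gx,gy) for a group action). Then #(𝒳, d_F, 2Lε) ≤ 2^{|F|} · M^{|F|/L} · N, where d_F(x,y) = max_{g∈F} d(gx,gy). -/
import Mathlib


open MeasureTheory Filter

set_option maxHeartbeats 1000000

/-- The minimal cardinality `#(𝒳,ρ,ε)` of an open cover of `𝒳` all of whose members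
have `ρ`-diameter `< ε`. -/
noncomputable def covNum (𝒳 : Type*) [TopologicalSpace 𝒳] (ρ : 𝒳 → 𝒳 → ℝ) (ε : ℝ) : ℕ :=
  sInf {n : ℕ | ∃ U : Finset (Set 𝒳), U.card = n ∧ (∀ V ∈ U, IsOpen V) ∧
    (⋃ V ∈ U, V) = Set.univ ∧ ∀ V ∈ U, ∀ x ∈ V, ∀ y ∈ V, ρ x y < ε}

/-- The max (sup) metric `d_F(x,y) = max_{g∈F} d(gx,gy)`. -/
noncomputable def dMax {G 𝒳 : Type*} [SMul G 𝒳] [MetricSpace 𝒳] (F : Finset G)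
    (x y : 𝒳) : ℝ :=
  ⨆ g ∈ F, dist (g • x) (g • y)

/-- The averaged metric `d̄_F(x,y) = (1/|F|) ∑_{g∈F} d(gx,gy)`. -/
noncomputable def dBar {G 𝒳 : Type*} [SMul G 𝒳] [MetricSpace 𝒳] (F : Finset G)
    (x y : 𝒳) : ℝ :=
  ((F.card : ℝ))⁻¹ * ∑ g ∈ F, dist (g • x) (g • y)

/-- `F` is a (left) Følner sequence of nonempty finite subsets of `G`. -/
def IsFolner {G : Type*} [Group G] [DecidableEq G] (F : ℕ → Finset G) : Prop :=
  (∀ n, (F n).Nonempty) ∧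
  ∀ g : G, Filter.Tendsto
    (fun n => ((symmDiff ((F n).image (fun h => g * h)) (F n)).card : ℝ) / ((F n).card : ℝ))
    Filter.atTop (nhds 0)

/-- bound on dMax -/
lemma dMax_le_aux {G 𝒳 : Type*} [SMul G 𝒳] [MetricSpace 𝒳] {F : Finset G}
    {y z : 𝒳} {b : ℝ} (hb : 0 ≤ b) (h : ∀ g ∈ F, dist (g • y) (g • z) ≤ b) :
    dMax F y z ≤ b :=
  Real.iSup_le (fun g => Real.iSup_le (fun hg => h g hg) hb) hb

/-- existence of covers for continuous pseudometrics on compact spaces -/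
lemma covNum_set_nonempty {𝒳 : Type*} [MetricSpace 𝒳] [CompactSpace 𝒳]
    (ρ : 𝒳 → 𝒳 → ℝ) {ε : ℝ} (hε : 0 < ε)
    (hopen : ∀ x, IsOpen {y | ρ x y < ε / 2}) (h0 : ∀ x, ρ x x = 0)
    (htri : ∀ x y z, ρ y z ≤ ρ x y + ρ x z) :
    {n : ℕ | ∃ U : Finset (Set 𝒳), U.card = n ∧ (∀ V ∈ U, IsOpen V) ∧
      (⋃ V ∈ U, V) = Set.univ ∧ ∀ V ∈ U, ∀ x ∈ V, ∀ y ∈ V, ρ x y < ε}.Nonempty := by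
  classical
  obtain ⟨t, ht⟩ := IsCompact.elim_finite_subcover isCompact_univ
    (fun x => {y | ρ x y < ε / 2}) hopen
    (fun x _ => Set.mem_iUnion.mpr ⟨x, by simpa [h0 x] using half_pos hε⟩)
  refine ⟨(t.image fun x => {y | ρ x y < ε / 2}).card,
    t.image fun x => {y | ρ x y < ε / 2}, rfl, ?_, ?_, ?_⟩
  · intro V hV
    obtain ⟨x, -, rfl⟩ := Finset.mem_image.mp hV
    exact hopen x
  · apply Set.eq_univ_iff_forall.mpr
    intro x
    obtain ⟨x₀, hx₀t, hx₀⟩ := Set.mem_iUnion₂.mp (ht (Set.mem_univ x))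
    exact Set.mem_biUnion (Finset.mem_image.mpr ⟨x₀, hx₀t, rfl⟩) hx₀
  · intro V hV y hy z hz
    obtain ⟨x, -, rfl⟩ := Finset.mem_image.mp hV
    calc ρ y z ≤ ρ x y + ρ x z := htri x y z
    _ < ε / 2 + ε / 2 := add_lt_add hy hz
    _ = ε := add_halves ε

/-- Covering-number estimate: with `M = #(𝒳,d,ε)` and `N = #(𝒳,d̄_F,ε)`, one has
`#(𝒳, d_F, 2Lε) ≤ 2^{|F|} M^{|F|/L} N`. -/
theorem covNum_dMax_le {G 𝒳 : Type*} [Group G] [MulAction G 𝒳]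
    [MetricSpace 𝒳] [CompactSpace 𝒳]
    (hcont : ∀ g : G, Continuous fun x : 𝒳 => g • x)
    (F : Finset G) (hF : F.Nonempty) (ε L : ℝ) (hε : 0 < ε) (hL : 1 ≤ L) :
    (covNum 𝒳 (dMax F) (2 * L * ε) : ℝ) ≤
      2 ^ F.card * (covNum 𝒳 dist ε : ℝ) ^ ((F.card : ℝ) / L) *
        (covNum 𝒳 (dBar F) ε : ℝ) := by
  classical
  have hL0 : (0:ℝ) < L := lt_of_lt_of_le one_pos hL
  rcases isEmpty_or_nonempty 𝒳 with hE | hNE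
  · have h0 : ∀ (ρ : 𝒳 → 𝒳 → ℝ) (ε' : ℝ), covNum 𝒳 ρ ε' = 0 := by
      intro ρ ε'
      refine Nat.sInf_eq_zero.mpr (Or.inl ⟨∅, by simp, by simp, ?_, by simp⟩)
      simpa using (Set.univ_eq_empty_iff.mpr hE).symm
    simp [h0]
  -- main case
  set M := covNum 𝒳 dist ε with hM
  set N := covNum 𝒳 (dBar F) ε with hN
  have hFc : (0:ℝ) < F.card := by exact_mod_cast Finset.card_pos.mpr hF
  -- the M-cover
  have hMmem : M ∈ {n : ℕ | ∃ U : Finset (Set 𝒳), U.card = n ∧ (∀ V ∈ U, IsOpen V) ∧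
      (⋃ V ∈ U, V) = Set.univ ∧ ∀ V ∈ U, ∀ x ∈ V, ∀ y ∈ V, dist x y < ε} := by
    apply Nat.sInf_mem
    exact covNum_set_nonempty dist hε
      (fun x => isOpen_lt (continuous_const.dist continuous_id) continuous_const)
      (fun x => dist_self x) (fun x y z => dist_triangle_left y z x)
  -- the N-cover
  have hNmem : N ∈ {n : ℕ | ∃ U : Finset (Set 𝒳), U.card = n ∧ (∀ V ∈ U, IsOpen V) ∧
      (⋃ V ∈ U, V) = Set.univ ∧ ∀ V ∈ U, ∀ x ∈ V, ∀ y ∈ V, dBar F x y < ε} := by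
    apply Nat.sInf_mem
    refine covNum_set_nonempty (dBar F) hε ?_ ?_ ?_
    · intro x
      have : Continuous fun y => dBar F x y := by
        apply Continuous.mul continuous_const
        exact continuous_finset_sum _ fun g _ => continuous_const.dist (hcont g)
      exact isOpen_lt this continuous_const
    · intro x; simp [dBar]
    · intro x y z
      unfold dBar
      rw [← mul_add]
      apply mul_le_mul_of_nonneg_left _ (by positivity)
      rw [← Finset.sum_add_distrib]
      exact Finset.sum_le_sum fun g _ => dist_triangle_left _ _ _
  obtain ⟨MU, hMUcard, hMUopen, hMUuniv, hMUdiam⟩ := hMmem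
  obtain ⟨NV, hNVcard, hNVopen, hNVuniv, hNVdiam⟩ := hNmem
  obtain ⟨x⟩ := hNE
  have hM1 : 1 ≤ M := by
    obtain ⟨V, hV, -⟩ := Set.mem_iUnion₂.mp (hMUuniv ▸ Set.mem_univ x)
    rw [← hMUcard]
    exact Finset.card_pos.mpr ⟨V, hV⟩
  -- base points of N-cover elements
  set pt : Set 𝒳 → 𝒳 := fun V => if h : V.Nonempty then h.choose else x with hptdef
  have hpt : ∀ V : Set 𝒳, V.Nonempty → pt V ∈ V := by
    intro V h
    rw [hptdef]
    simp only [dif_pos h]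
    exact h.choose_spec
  -- choice of M-cover element containing a point
  choose u hu1 hu2 using fun p : 𝒳 => Set.mem_iUnion₂.mp (hMUuniv ▸ Set.mem_univ p)
  set K := ⌊(F.card : ℝ) / L⌋₊ with hK
  -- the index finset and the pieces
  set piece : Set 𝒳 × (Σ B : Finset G, ∀ g ∈ B, Set 𝒳) → Set 𝒳 := fun q =>
    q.1 ∩ ⋂ g : {g // g ∈ F},
      if h : g.1 ∈ q.2.1 then (fun y => g.1 • y) ⁻¹' q.2.2 g.1 h
      else {y | dist (g.1 • pt q.1) (g.1 • y) < L * ε} with hpiece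
  set S : Finset (Set 𝒳 × (Σ B : Finset G, ∀ g ∈ B, Set 𝒳)) :=
    NV ×ˢ ((F.powerset.filter fun B => B.card ≤ K).sigma fun B => B.pi fun _ => MU)
    with hS
  set cover := S.image piece with hcover
  -- openness of pieces
  have hopen : ∀ q ∈ S, IsOpen (piece q) := by
    intro q hq
    obtain ⟨hq1, hq2⟩ := Finset.mem_product.mp hq
    obtain ⟨hqB, hqf⟩ := Finset.mem_sigma.mp hq2
    apply IsOpen.inter (hNVopen _ hq1)
    apply isOpen_iInter_of_finite
    intro g
    by_cases h : g.1 ∈ q.2.1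
    · rw [dif_pos h]
      exact (hMUopen _ ((Finset.mem_pi.mp hqf) g.1 h)).preimage (hcont g.1)
    · rw [dif_neg h]
      exact isOpen_lt (continuous_const.dist (hcont g.1)) continuous_const
  -- covering
  have huniv : (⋃ V ∈ cover, V) = Set.univ := by
    apply Set.eq_univ_iff_forall.mpr
    intro p
    obtain ⟨V, hV, hpV⟩ := Set.mem_iUnion₂.mp (hNVuniv ▸ Set.mem_univ p)
    set B : Finset G := F.filter fun g => L * ε ≤ dist (g • pt V) (g • p) with hB
    have hptV : pt V ∈ V := hpt V ⟨p, hpV⟩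
    have hBK : B.card ≤ K := by
      have hd : dBar F (pt V) p < ε := hNVdiam V hV _ hptV _ hpV
      have hsum : ∑ g ∈ F, dist (g • pt V) (g • p) < (F.card : ℝ) * ε := by
        have := (mul_lt_mul_iff_right₀ hFc).mpr hd
        rw [dBar, ← mul_assoc, mul_inv_cancel₀ (ne_of_gt hFc), one_mul] at this
        exact this
      have hsub : (B.card : ℝ) * (L * ε) ≤ ∑ g ∈ F, dist (g • pt V) (g • p) := by
        calc (B.card : ℝ) * (L * ε) = B.card • (L * ε) := (nsmul_eq_mul _ _).symm
        _ ≤ ∑ g ∈ B, dist (g • pt V) (g • p) :=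
            Finset.card_nsmul_le_sum _ _ _ fun g hg => (Finset.mem_filter.mp hg).2
        _ ≤ ∑ g ∈ F, dist (g • pt V) (g • p) :=
            Finset.sum_le_sum_of_subset_of_nonneg (Finset.filter_subset _ _)
              (fun _ _ _ => dist_nonneg)
      apply Nat.le_floor
      rw [le_div_iff₀ hL0]
      nlinarith [lt_of_le_of_lt hsub hsum]
    set f : ∀ g ∈ B, Set 𝒳 := fun g _ => u (g • p) with hf
    have hqS : (V, ⟨B, f⟩) ∈ S := by
      rw [hS, Finset.mem_product]
      refine ⟨hV, Finset.mem_sigma.mpr ⟨?_, ?_⟩⟩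
      · exact Finset.mem_filter.mpr ⟨Finset.mem_powerset.mpr (Finset.filter_subset _ _), hBK⟩
      · exact Finset.mem_pi.mpr fun g hg => hu1 _
    refine Set.mem_biUnion (Finset.mem_image.mpr ⟨_, hqS, rfl⟩) ⟨hpV, ?_⟩
    rw [Set.mem_iInter]
    intro g
    by_cases h : g.1 ∈ B
    · rw [dif_pos h]
      exact hu2 _
    · rw [dif_neg h]
      have := Finset.mem_filter.not.mp h
      push_neg at this
      exact this g.2
  -- diameter
  have hdiam : ∀ V ∈ cover, ∀ y ∈ V, ∀ z ∈ V, dMax F y z < 2 * L * ε := by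
    intro W hW y hy z hz
    obtain ⟨q, hqS, rfl⟩ := Finset.mem_image.mp hW
    obtain ⟨hq1, hq2⟩ := Finset.mem_product.mp hqS
    obtain ⟨hqB, hqf⟩ := Finset.mem_sigma.mp hq2
    have key : ∀ g ∈ F, dist (g • y) (g • z) < 2 * L * ε := by
      intro g hg
      have hyg := Set.mem_iInter.mp hy.2 ⟨g, hg⟩
      have hzg := Set.mem_iInter.mp hz.2 ⟨g, hg⟩
      by_cases h : g ∈ q.2.1
      · rw [dif_pos h] at hyg hzg
        have := hMUdiam _ ((Finset.mem_pi.mp hqf) g h) _ hyg _ hzg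
        nlinarith
      · rw [dif_neg h] at hyg hzg
        have hyg' : dist (g • pt q.1) (g • y) < L * ε := hyg
        have hzg' : dist (g • pt q.1) (g • z) < L * ε := hzg
        have := dist_triangle_left (g • y) (g • z) (g • pt q.1)
        nlinarith
    obtain ⟨g₀, hg₀, hs⟩ := Finset.exists_mem_eq_sup' hF fun g => dist (g • y) (g • z)
    have h1 : dMax F y z ≤ F.sup' hF fun g => dist (g • y) (g • z) :=
      dMax_le_aux (hs ▸ dist_nonneg) fun g hg => Finset.le_sup' (fun g => dist (g • y) (g • z)) hg
    exact lt_of_le_of_lt h1 ((Finset.sup'_lt_iff hF).mpr key)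
  -- counting
  have hcard : cover.card ≤ N * (2 ^ F.card * M ^ K) := by
    calc cover.card ≤ S.card := Finset.card_image_le
    _ = NV.card * ∑ B ∈ F.powerset.filter fun B => B.card ≤ K, (B.pi fun _ => MU).card := by
        rw [hS, Finset.card_product, Finset.card_sigma]
    _ ≤ N * (2 ^ F.card * M ^ K) := by
        rw [hNVcard]
        apply Nat.mul_le_mul_left
        calc ∑ B ∈ F.powerset.filter fun B => B.card ≤ K, (B.pi fun _ => MU).card
            ≤ (F.powerset.filter fun B => B.card ≤ K).card * M ^ K := by
              apply Finset.sum_le_card_nsmul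
              intro B hB
              rw [Finset.card_pi]
              calc ∏ _g ∈ B, MU.card = M ^ B.card := by rw [Finset.prod_const, hMUcard]
              _ ≤ M ^ K := Nat.pow_le_pow_right hM1 (Finset.mem_filter.mp hB).2
        _ ≤ 2 ^ F.card * M ^ K := by
              apply Nat.mul_le_mul_right
              calc (F.powerset.filter fun B => B.card ≤ K).card ≤ F.powerset.card :=
                    Finset.card_filter_le _ _
              _ = 2 ^ F.card := Finset.card_powerset F
  -- conclude
  have hopen2 : ∀ V ∈ cover, IsOpen V := by
    intro V hV
    obtain ⟨q, hq, rfl⟩ := Finset.mem_image.mp hV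
    exact hopen q hq
  have hle : covNum 𝒳 (dMax F) (2 * L * ε) ≤ N * (2 ^ F.card * M ^ K) :=
    le_trans (Nat.sInf_le ⟨cover, rfl, hopen2, huniv, hdiam⟩) hcard
  have hKle : ((K : ℕ) : ℝ) ≤ (F.card : ℝ) / L := by
    rw [hK]
    exact Nat.floor_le (div_nonneg (Nat.cast_nonneg _) hL0.le)
  have hMr : (M : ℝ) ^ (K : ℕ) ≤ (M : ℝ) ^ ((F.card : ℝ) / L) := by
    rw [← Real.rpow_natCast (M : ℝ) K]
    exact Real.rpow_le_rpow_of_exponent_le (by exact_mod_cast hM1) hKle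
  have hle2 : (covNum 𝒳 (dMax F) (2 * L * ε) : ℝ) ≤ ((N * (2 ^ F.card * M ^ K) : ℕ) : ℝ) :=
    Nat.cast_le.mpr hle
  calc (covNum 𝒳 (dMax F) (2 * L * ε) : ℝ) ≤ (N : ℝ) * (2 ^ F.card * (M : ℝ) ^ (K : ℕ)) := by
        push_cast at hle2
        exact hle2
  _ ≤ (N : ℝ) * (2 ^ F.card * (M : ℝ) ^ ((F.card : ℝ) / L)) := by
        apply mul_le_mul_of_nonneg_left _ (Nat.cast_nonneg N)
        apply mul_le_mul_of_nonneg_left hMr (by positivity)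
  _ = 2 ^ F.card * (M : ℝ) ^ ((F.card : ℝ) / L) * N := by ring
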